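/- Let the conformal p-value for a test point with score s* relative to calibration scores s₁,…,s_n and calibration null indicators b₁,…,b_n ∈ {0,1} be p = (1 + Σᵢ 1{s* ≥ sᵢ, bᵢ = 1})/(n+1). If (s*, s₁,…,s_n) are exchangeable on the event that the test point is null (b* = 1, and all bᵢ = 1 for calibration nulls included in the count), then P(p ≤ t and test point is null) ≤ t for every t ∈ [0,1]. -/
import Mathlib

open MeasureTheory
open scoped ENNReal NNReal

namespace ConformalAux

variable {n : ℕ}

/-- Rank: number of null indices with score ≤ score at j (including j if null). -/
noncomputable def R (w : Fin (n + 1) → ℝ × Bool) (j : Fin (n + 1)) : ℕ :=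
  (Finset.univ.filter fun i : Fin (n + 1) => (w i).1 ≤ (w j).1 ∧ (w i).2 = true).card

def E (n m : ℕ) (j : Fin (n + 1)) : Set (Fin (n + 1) → ℝ × Bool) :=
  {w | R w j ≤ m ∧ (w j).2 = true}

lemma R_eq_sum (w : Fin (n + 1) → ℝ × Bool) (j : Fin (n + 1)) :
    R w j = ∑ i : Fin (n + 1), if (w i).1 ≤ (w j).1 ∧ (w i).2 = true then 1 else 0 := by
  rw [R, Finset.card_filter]

lemma measSet_cond (i j : Fin (n + 1)) :
    MeasurableSet {w : Fin (n + 1) → ℝ × Bool | (w i).1 ≤ (w j).1 ∧ (w i).2 = true} := by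
  have h1 : MeasurableSet {w : Fin (n + 1) → ℝ × Bool | (w i).1 ≤ (w j).1} :=
    measurableSet_le ((measurable_pi_apply i).fst) ((measurable_pi_apply j).fst)
  have h2 : MeasurableSet {w : Fin (n + 1) → ℝ × Bool | (w i).2 = true} :=
    ((measurable_pi_apply i).snd) (measurableSet_singleton true)
  exact h1.inter h2

lemma measurable_R (j : Fin (n + 1)) :
    Measurable fun w : Fin (n + 1) → ℝ × Bool => R w j := by
  have : (fun w : Fin (n + 1) → ℝ × Bool => R w j)
      = fun w => ∑ i : Fin (n + 1), if (w i).1 ≤ (w j).1 ∧ (w i).2 = true then 1 else 0 :=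
    funext fun w => R_eq_sum w j
  rw [this]
  exact Finset.measurable_sum _ fun i _ =>
    Measurable.ite (measSet_cond i j) measurable_const measurable_const

lemma measSet_E (m : ℕ) (j : Fin (n + 1)) : MeasurableSet (E n m j) := by
  have h1 : MeasurableSet {w : Fin (n + 1) → ℝ × Bool | R w j ≤ m} :=
    measurable_R j measurableSet_Iic
  have h2 : MeasurableSet {w : Fin (n + 1) → ℝ × Bool | (w j).2 = true} :=
    ((measurable_pi_apply j).snd) (measurableSet_singleton true)
  exact h1.inter h2

lemma R_comp (σ : Equiv.Perm (Fin (n + 1))) (w : Fin (n + 1) → ℝ × Bool) (j : Fin (n + 1)) :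
    R (w ∘ σ) j = R w (σ j) := by
  rw [R_eq_sum, R_eq_sum]
  exact Equiv.sum_comp σ (fun i => if (w i).1 ≤ (w (σ j)).1 ∧ (w i).2 = true then 1 else 0)

lemma count_le (m : ℕ) (w : Fin (n + 1) → ℝ × Bool) :
    (Finset.univ.filter fun j : Fin (n + 1) => R w j ≤ m ∧ (w j).2 = true).card ≤ m := by
  set S := Finset.univ.filter fun j : Fin (n + 1) => R w j ≤ m ∧ (w j).2 = true with hS
  rcases S.eq_empty_or_nonempty with h | h
  · simp [h]
  · obtain ⟨j, hjS, hmax⟩ := S.exists_max_image (fun i => (w i).1) h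
    have hj := Finset.mem_filter.mp hjS
    calc S.card ≤ R w j := by
          apply Finset.card_le_card
          intro i hi
          have hi' := Finset.mem_filter.mp hi
          exact Finset.mem_filter.mpr ⟨Finset.mem_univ _, hmax i hi, hi'.2.2⟩
      _ ≤ m := hj.2.1

lemma R_last (w : Fin (n + 1) → ℝ × Bool) (hb : (w (Fin.last n)).2 = true) :
    R w (Fin.last n) = (Finset.univ.filter fun i : Fin n =>
      (w i.castSucc).1 ≤ (w (Fin.last n)).1 ∧ (w i.castSucc).2 = true).card + 1 := by
  rw [R_eq_sum, Finset.card_filter, Fin.sum_univ_castSucc]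
  simp [hb]

end ConformalAux

open ConformalAux

/-- Validity of conformal p-values: P(p ≤ t, test point is null) ≤ t. -/
theorem conformal_pvalue_valid
    {Ω : Type*} [MeasurableSpace Ω] (μ : Measure Ω) [IsProbabilityMeasure μ]
    (n : ℕ) (W : Ω → Fin (n + 1) → ℝ × Bool) (hW : Measurable W)
    (hexch : ∀ σ : Equiv.Perm (Fin (n + 1)),
      Measure.map (fun ω => W ω ∘ σ) μ = Measure.map W μ) :
    ∀ t ∈ Set.Icc (0 : ℝ) 1,
      μ {ω | ((1 + ((Finset.univ.filter fun i : Fin n =>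
              (W ω i.castSucc).1 ≤ (W ω (Fin.last n)).1 ∧ (W ω i.castSucc).2 = true).card
            : ℝ)) / ((n : ℝ) + 1) ≤ t)
          ∧ (W ω (Fin.last n)).2 = true}
        ≤ ENNReal.ofReal t := by
  classical
  rintro t ⟨ht0, ht1⟩
  have hnpos : (0 : ℝ) < (n : ℝ) + 1 := by positivity
  set m := ⌊t * ((n : ℝ) + 1)⌋₊ with hm
  have htn : (0 : ℝ) ≤ t * ((n : ℝ) + 1) := mul_nonneg ht0 hnpos.le
  set A : Fin (n + 1) → Set Ω := fun j => W ⁻¹' E n m j with hA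
  have hAmeas : ∀ j, MeasurableSet (A j) := fun j => hW (measSet_E m j)
  -- the event in the statement equals A (Fin.last n)
  have hev : {ω | ((1 + ((Finset.univ.filter fun i : Fin n =>
              (W ω i.castSucc).1 ≤ (W ω (Fin.last n)).1 ∧ (W ω i.castSucc).2 = true).card
            : ℝ)) / ((n : ℝ) + 1) ≤ t)
          ∧ (W ω (Fin.last n)).2 = true} = A (Fin.last n) := by
    ext ω
    simp only [hA, Set.mem_setOf_eq, Set.mem_preimage, E]
    constructor
    · rintro ⟨hle, hb⟩
      refine ⟨?_, hb⟩
      rw [R_last (W ω) hb]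
      rw [Nat.le_floor_iff htn]
      have := (div_le_iff₀ hnpos).mp hle
      push_cast
      linarith
    · rintro ⟨hR, hb⟩
      refine ⟨?_, hb⟩
      rw [R_last (W ω) hb] at hR
      have := (Nat.le_floor_iff htn).mp hR
      rw [div_le_iff₀ hnpos]
      push_cast at this ⊢
      linarith
  -- all A j have the same measure
  have key : ∀ j : Fin (n + 1), μ (A j) = μ (A (Fin.last n)) := by
    intro j
    set σ := Equiv.swap j (Fin.last n) with hσ
    have hWσ : Measurable fun ω => W ω ∘ σ :=
      measurable_pi_iff.mpr fun i => (measurable_pi_apply (σ i)).comp hW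
    have h1 : A j = (fun ω => W ω ∘ σ) ⁻¹' E n m (Fin.last n) := by
      ext ω
      simp only [hA, Set.mem_preimage, E, Set.mem_setOf_eq, R_comp]
      have hσl : σ (Fin.last n) = j := Equiv.swap_apply_right _ _
      rw [Function.comp_apply, hσl]
    rw [h1, ← Measure.map_apply hWσ (measSet_E m (Fin.last n)), hexch σ,
      Measure.map_apply hW (measSet_E m (Fin.last n))]
  -- sum bound
  have hsum : ∑ j : Fin (n + 1), μ (A j) ≤ (m : ℝ≥0∞) := by
    have h1 : ∀ j, μ (A j) = ∫⁻ ω, (A j).indicator (1 : Ω → ℝ≥0∞) ω ∂μ := by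
      intro j
      exact (lintegral_indicator_one (hAmeas j)).symm
    calc ∑ j : Fin (n + 1), μ (A j)
        = ∫⁻ ω, ∑ j : Fin (n + 1), (A j).indicator (1 : Ω → ℝ≥0∞) ω ∂μ := by
          rw [lintegral_finset_sum]
          · exact Finset.sum_congr rfl fun j _ => h1 j
          · exact fun j _ => (measurable_const.indicator (hAmeas j))
      _ ≤ ∫⁻ _, (m : ℝ≥0∞) ∂μ := by
          apply lintegral_mono
          intro ω
          have heq : ∑ j : Fin (n + 1), (A j).indicator (1 : Ω → ℝ≥0∞) ω
              = ((Finset.univ.filter fun j : Fin (n + 1) => ω ∈ A j).card : ℝ≥0∞) := by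
            rw [Finset.card_filter]
            push_cast
            exact Finset.sum_congr rfl fun j _ => by simp [Set.indicator_apply]
          show ∑ j : Fin (n + 1), (A j).indicator (1 : Ω → ℝ≥0∞) ω ≤ (m : ℝ≥0∞)
          rw [heq]
          have hcard : (Finset.univ.filter fun j : Fin (n + 1) => ω ∈ A j).card
              = (Finset.univ.filter fun j : Fin (n + 1) =>
                  R (W ω) j ≤ m ∧ (W ω j).2 = true).card := by
            congr 1
            apply Finset.filter_congr
            intro j _
            simp [hA, E, Set.mem_preimage, Set.mem_setOf_eq]
          rw [hcard]
          exact_mod_cast count_le m (W ω)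
      _ = (m : ℝ≥0∞) := by simp [measure_univ]
  have hsum' : (↑(n + 1) : ℝ≥0∞) * μ (A (Fin.last n)) ≤ (m : ℝ≥0∞) := by
    calc (↑(n + 1) : ℝ≥0∞) * μ (A (Fin.last n))
        = ∑ j : Fin (n + 1), μ (A j) := by
          rw [Finset.sum_congr rfl fun j _ => key j, Finset.sum_const, Finset.card_univ]
          simp [mul_comm, nsmul_eq_mul]
      _ ≤ (m : ℝ≥0∞) := hsum
  rw [hev]
  -- conclude
  have hncast : ((n + 1 : ℕ) : ℝ≥0∞) ≠ 0 := by exact_mod_cast Nat.succ_ne_zero n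
  have hnfin : ((n + 1 : ℕ) : ℝ≥0∞) ≠ ⊤ := ENNReal.natCast_ne_top _
  rw [← ENNReal.mul_le_mul_iff_right hncast hnfin (b := μ (A (Fin.last n)))]
  calc (↑(n + 1) : ℝ≥0∞) * μ (A (Fin.last n)) ≤ (m : ℝ≥0∞) := hsum'
    _ ≤ (↑(n + 1) : ℝ≥0∞) * ENNReal.ofReal t := by
        have h1 : (m : ℝ) ≤ t * ((n : ℝ) + 1) := Nat.floor_le htn
        have h2 : (m : ℝ≥0∞) = ENNReal.ofReal (m : ℝ) := by
          simp [ENNReal.ofReal_natCast]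
        rw [h2]
        have h3 : (↑(n + 1) : ℝ≥0∞) * ENNReal.ofReal t
            = ENNReal.ofReal (((n : ℝ) + 1) * t) := by
          rw [ENNReal.ofReal_mul (by positivity : (0:ℝ) ≤ (n:ℝ) + 1)]
          congr 1
          rw [show ((n:ℝ) + 1) = ((n + 1 : ℕ) : ℝ) by push_cast; ring,
            ENNReal.ofReal_natCast]
        rw [h3]
        exact ENNReal.ofReal_le_ofReal (by linarith)
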